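/- Let f₀, f₁ : Coin → ℕ+ be bijections with f₀⁻¹([l₀,u₀]) = f₁⁻¹([l₁,u₁]) (as sets of coins, via the biconditional f₀(c) ∈ [l₀,u₀] ↔ f₁(c) ∈ [l₁,u₁]). Define f₁' : Coin → ℕ+ by f₁'(c) = f₀(c) − l₀ + l₁ if f₁(c) ∈ [l₁,u₁], and f₁'(c) = f₁(c) otherwise. Then f₁' is a bijection, satisfies f₁'(c) ∈ [l₁,u₁] ↔ f₁(c) ∈ [l₁,u₁] for all c, and for all c with f₀(c) ∈ [l₀,u₀] one has f₁'(c) + l₀ = f₀(c) + l₁. -/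

import Mathlib

theorem stmt14 {Coin : Type*} (f₀ f₁ : Coin → ℕ+)
    (hb₀ : Function.Bijective f₀) (hb₁ : Function.Bijective f₁)
    (l₀ u₀ l₁ u₁ : ℕ+) (h₀ : l₀ ≤ u₀) (h₁ : l₁ ≤ u₁)
    (h : ∀ c, f₀ c ∈ Set.Icc l₀ u₀ ↔ f₁ c ∈ Set.Icc l₁ u₁) :
    ∃ f₁' : Coin → ℕ+,
      (∀ c, f₁ c ∈ Set.Icc l₁ u₁ → (f₁' c : ℕ) = (f₀ c : ℕ) - (l₀ : ℕ) + (l₁ : ℕ)) ∧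
      (∀ c, f₁ c ∉ Set.Icc l₁ u₁ → f₁' c = f₁ c) ∧
      Function.Bijective f₁' ∧
      (∀ c, f₁' c ∈ Set.Icc l₁ u₁ ↔ f₁ c ∈ Set.Icc l₁ u₁) ∧
      (∀ c, f₀ c ∈ Set.Icc l₀ u₀ → (f₁' c : ℕ) + (l₀ : ℕ) = (f₀ c : ℕ) + (l₁ : ℕ)) := by
  -- equal interval lengths
  have hset : f₀ ⁻¹' (Set.Icc l₀ u₀) = f₁ ⁻¹' (Set.Icc l₁ u₁) := by
    ext c; exact h c
  have hcard : (u₀ : ℕ) + (l₁ : ℕ) = (u₁ : ℕ) + (l₀ : ℕ) := by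
    have c0 : Nat.card (f₀ ⁻¹' (Set.Icc l₀ u₀)) = Nat.card (Set.Icc l₀ u₀) :=
      Nat.card_preimage_of_injective hb₀.injective
        (by rw [hb₀.surjective.range_eq]; exact Set.subset_univ _)
    have c1 : Nat.card (f₁ ⁻¹' (Set.Icc l₁ u₁)) = Nat.card (Set.Icc l₁ u₁) :=
      Nat.card_preimage_of_injective hb₁.injective
        (by rw [hb₁.surjective.range_eq]; exact Set.subset_univ _)
    have e0 : Nat.card (Set.Icc l₀ u₀) = (u₀ : ℕ) + 1 - (l₀ : ℕ) := by
      rw [Nat.card_coe_set_eq, Set.ncard_eq_toFinset_card', Set.toFinset_Icc, PNat.card_Icc]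
    have e1 : Nat.card (Set.Icc l₁ u₁) = (u₁ : ℕ) + 1 - (l₁ : ℕ) := by
      rw [Nat.card_coe_set_eq, Set.ncard_eq_toFinset_card', Set.toFinset_Icc, PNat.card_Icc]
    have key : (u₀ : ℕ) + 1 - (l₀ : ℕ) = (u₁ : ℕ) + 1 - (l₁ : ℕ) := by
      rw [← e0, ← e1, ← c0, ← c1, hset]
    have h₀' : (l₀ : ℕ) ≤ u₀ := h₀
    have h₁' : (l₁ : ℕ) ≤ u₁ := h₁
    omega
  classical
  refine ⟨fun c => if f₁ c ∈ Set.Icc l₁ u₁ then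
      ⟨(f₀ c : ℕ) - (l₀ : ℕ) + (l₁ : ℕ), by positivity⟩ else f₁ c, ?_, ?_, ?_, ?_, ?_⟩
  · intro c hc; simp [hc]
  · intro c hc; simp [hc]
  · constructor
    · intro a b hab
      by_cases ha : f₁ a ∈ Set.Icc l₁ u₁ <;> by_cases hb' : f₁ b ∈ Set.Icc l₁ u₁
      · simp only [ha, hb', if_pos] at hab
        have ha0 : f₀ a ∈ Set.Icc l₀ u₀ := (h a).mpr ha
        have hb0 : f₀ b ∈ Set.Icc l₀ u₀ := (h b).mpr hb'
        have hla : (l₀ : ℕ) ≤ (f₀ a : ℕ) := ha0.1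
        have hlb : (l₀ : ℕ) ≤ (f₀ b : ℕ) := hb0.1
        have : (f₀ a : ℕ) = (f₀ b : ℕ) := by
          have := congrArg (fun x : ℕ+ => (x : ℕ)) hab
          simp at this; omega
        exact hb₀.injective (PNat.coe_injective this)
      · exfalso
        have ha0 : f₀ a ∈ Set.Icc l₀ u₀ := (h a).mpr ha
        have hmem : (⟨(f₀ a : ℕ) - (l₀ : ℕ) + (l₁ : ℕ), by positivity⟩ : ℕ+) ∈ Set.Icc l₁ u₁ := by
          constructor
          · exact PNat.coe_le_coe _ _ |>.mp (by simp)
          · have : (f₀ a : ℕ) ≤ u₀ := ha0.2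
            have hla : (l₀ : ℕ) ≤ (f₀ a : ℕ) := ha0.1
            exact PNat.coe_le_coe _ _ |>.mp (by simp; omega)
        simp only [ha, hb', if_pos, if_neg, not_false_iff, ↓reduceIte] at hab
        rw [hab] at hmem
        exact hb' hmem
      · exfalso
        have hb0 : f₀ b ∈ Set.Icc l₀ u₀ := (h b).mpr hb'
        have hmem : (⟨(f₀ b : ℕ) - (l₀ : ℕ) + (l₁ : ℕ), by positivity⟩ : ℕ+) ∈ Set.Icc l₁ u₁ := by
          constructor
          · exact PNat.coe_le_coe _ _ |>.mp (by simp)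
          · have : (f₀ b : ℕ) ≤ u₀ := hb0.2
            have hlb : (l₀ : ℕ) ≤ (f₀ b : ℕ) := hb0.1
            exact PNat.coe_le_coe _ _ |>.mp (by simp; omega)
        simp only [ha, hb', if_pos, if_neg, not_false_iff, ↓reduceIte] at hab
        rw [← hab] at hmem
        exact ha hmem
      · simp only [ha, hb', if_neg, not_false_iff] at hab
        exact hb₁.injective hab
    · intro n
      by_cases hn : n ∈ Set.Icc l₁ u₁
      · obtain ⟨c, hc⟩ := hb₀.surjective ⟨(n : ℕ) - (l₁ : ℕ) + (l₀ : ℕ), by positivity⟩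
        have hn1 : (l₁ : ℕ) ≤ (n : ℕ) := hn.1
        have hn2 : (n : ℕ) ≤ (u₁ : ℕ) := hn.2
        have hc0 : f₀ c ∈ Set.Icc l₀ u₀ := by
          rw [hc]
          constructor
          · exact PNat.coe_le_coe _ _ |>.mp (by simp)
          · exact PNat.coe_le_coe _ _ |>.mp (by simp; omega)
        have hc1 : f₁ c ∈ Set.Icc l₁ u₁ := (h c).mp hc0
        refine ⟨c, ?_⟩
        simp only [hc1, if_pos]
        apply PNat.coe_injective
        simp [hc]
        omega
      · obtain ⟨c, hc⟩ := hb₁.surjective n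
        refine ⟨c, ?_⟩
        have : f₁ c ∉ Set.Icc l₁ u₁ := by rw [hc]; exact hn
        simp only [this, if_neg, not_false_iff]
        exact hc
  · intro c
    by_cases hc : f₁ c ∈ Set.Icc l₁ u₁
    · simp only [hc, if_pos, iff_true]
      have hc0 : f₀ c ∈ Set.Icc l₀ u₀ := (h c).mpr hc
      have h1 : (l₀ : ℕ) ≤ (f₀ c : ℕ) := hc0.1
      have h2 : (f₀ c : ℕ) ≤ (u₀ : ℕ) := hc0.2
      constructor
      · exact PNat.coe_le_coe _ _ |>.mp (by simp)
      · exact PNat.coe_le_coe _ _ |>.mp (by simp; omega)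
    · simp [hc]
  · intro c hc0
    have hc : f₁ c ∈ Set.Icc l₁ u₁ := (h c).mp hc0
    have h1 : (l₀ : ℕ) ≤ (f₀ c : ℕ) := hc0.1
    simp only [hc, if_pos]
    simp
    omega
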